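/- arXiv:1811.04205 — 2 statements merged into one kernel-verified Lean document; each statement's English description precedes it below -/
import Mathlib

section
/- Let x^0 be a random vector in ℝ^n with independent components, each symmetric about 0, and such that E[x^0_j / x^0_k] exists for all j,k. Then for a diagonalizable real matrix A with biorthogonal left/right eigenvectors ℓ^i, r^i, the mode-in-state participation factor p_{ki} := E[(ℓ^i x^0) r^i_k / x^0_k] equals ℓ^i_k r^i_k. -/
open MeasureTheory ProbabilityTheory Matrix Finset

/-- If the random initial state `x⁰ = X` has independent components, each
symmetric about `0`, with `X k ≠ 0` a.s. and all ratios `X j / X k` integrable, then for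
a real matrix `A` with biorthogonal left/right eigenvectors `l i`, `r i`, the
mode-in-state participation factor `p_{ki} = E[(l i ⬝ x⁰) r i k / x⁰ k]` equals
`l i k * r i k`. -/
theorem stmt5 {Ω : Type*} [MeasurableSpace Ω] (μ : Measure Ω) [IsProbabilityMeasure μ]
    (n : ℕ) (X : Fin n → Ω → ℝ)
    (hmeas : ∀ i, Measurable (X i))
    (hindep : iIndepFun X μ)
    (hsym : ∀ j, Measure.map (X j) μ = Measure.map (fun ω => -(X j ω)) μ)
    (A : Matrix (Fin n) (Fin n) ℝ) (lam : Fin n → ℝ)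
    (r l : Fin n → Fin n → ℝ)
    (hdist : Function.Injective lam)
    (hr : ∀ i, A.mulVec (r i) = lam i • r i)
    (hl : ∀ i, Matrix.vecMul (l i) A = lam i • l i)
    (hnorm : ∀ i j, ∑ k, l i k * r j k = if i = j then 1 else 0)
    (k : Fin n) (hne : ∀ᵐ ω ∂μ, X k ω ≠ 0)
    (hint : ∀ j, Integrable (fun ω => X j ω / X k ω) μ) :
    ∀ i, ∫ ω, (∑ j, l i j * X j ω) * r i k / X k ω ∂μ = l i k * r i k := by
  have key : ∀ j, ∫ ω, X j ω / X k ω ∂μ = if j = k then 1 else 0 := by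
    intro j
    by_cases hjk : j = k
    · subst hjk
      rw [if_pos rfl]
      have h1 : (fun ω => X j ω / X j ω) =ᵐ[μ] fun _ => (1 : ℝ) :=
        hne.mono fun ω h => div_self h
      rw [integral_congr_ae h1]
      simp
    · rw [if_neg hjk]
      have hind : IndepFun (X j) (X k) μ := hindep.indepFun hjk
      have hind' : IndepFun (fun ω => -(X j ω)) (X k) μ := by
        have := hind.comp measurable_neg measurable_id
        exact this
      have hmap : μ.map (fun ω => (X j ω, X k ω)) = (μ.map (X j)).prod (μ.map (X k)) :=
        (indepFun_iff_map_prod_eq_prod_map_map (hmeas j).aemeasurable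
          (hmeas k).aemeasurable).mp hind
      have hmap' : μ.map (fun ω => (-(X j ω), X k ω))
          = (μ.map (fun ω => -(X j ω))).prod (μ.map (X k)) :=
        (indepFun_iff_map_prod_eq_prod_map_map ((hmeas j).neg).aemeasurable
          (hmeas k).aemeasurable).mp hind'
      have heq : μ.map (fun ω => (X j ω, X k ω)) = μ.map (fun ω => (-(X j ω), X k ω)) := by
        rw [hmap, hmap', hsym j]
      have hf : Measurable (fun p : ℝ × ℝ => p.1 / p.2) := measurable_fst.div measurable_snd
      have h1 : ∫ ω, X j ω / X k ω ∂μ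
          = ∫ p : ℝ × ℝ, p.1 / p.2 ∂(μ.map (fun ω => (X j ω, X k ω))) := by
        rw [integral_map ((hmeas j).prodMk (hmeas k)).aemeasurable
          hf.aestronglyMeasurable]
      have h2 : ∫ ω, -(X j ω) / X k ω ∂μ
          = ∫ p : ℝ × ℝ, p.1 / p.2 ∂(μ.map (fun ω => (-(X j ω), X k ω))) := by
        rw [integral_map (((hmeas j).neg).prodMk (hmeas k)).aemeasurable (φ := fun ω => (-(X j ω), X k ω))
          hf.aestronglyMeasurable]
      have hneg : ∫ ω, X j ω / X k ω ∂μ = ∫ ω, -(X j ω) / X k ω ∂μ := by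
        rw [h1, heq, h2]
      have hneg2 : ∫ ω, -(X j ω) / X k ω ∂μ = - ∫ ω, X j ω / X k ω ∂μ := by
        simp_rw [neg_div]
        exact integral_neg _
      rw [hneg2] at hneg
      linarith
  intro i
  have hstep : ∫ ω, (∑ j, l i j * X j ω) * r i k / X k ω ∂μ
      = ∫ ω, ∑ j, (l i j * r i k) * (X j ω / X k ω) ∂μ := by
    refine integral_congr_ae (Filter.Eventually.of_forall fun ω => ?_)
    simp only [Finset.sum_mul, Finset.sum_div]
    exact Finset.sum_congr rfl fun j _ => by ring
  rw [hstep, integral_finset_sum _ (fun j _ => (hint j).const_mul (l i j * r i k))]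
  simp_rw [integral_const_mul, key]
  simp
end

section
/- Let S ⊂ ℝ^n be a bounded measurable set of positive measure that is symmetric with respect to each coordinate hyperplane {x_k = 0} (i.e., invariant under flipping the sign of any single coordinate), and suppose the function x ↦ x_j/x_k is integrable on S for j ≠ k. Then the average of x_j/x_k over S is 0 for j ≠ k, and consequently the set-theoretic mode-in-state participation factor avg_{x^0 ∈ S} (ℓ^i x^0) r^i_k / x^0_k equals ℓ^i_k r^i_k. -/
open MeasureTheory Matrix Finset

section Aux

variable {n : ℕ}

/-- Flipping one coordinate as a measurable equivalence. -/
def flipEquiv (j : Fin n) : (Fin n → ℝ) ≃ᵐ (Fin n → ℝ) where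
  toFun x := Function.update x j (-(x j))
  invFun x := Function.update x j (-(x j))
  left_inv x := by
    funext i
    rcases eq_or_ne i j with rfl | h
    · simp
    · simp [Function.update_of_ne h]
  right_inv x := by
    funext i
    rcases eq_or_ne i j with rfl | h
    · simp
    · simp [Function.update_of_ne h]
  measurable_toFun := by
    show Measurable (fun x : Fin n → ℝ => Function.update x j (-(x j)))
    apply measurable_pi_lambda
    intro i
    rcases eq_or_ne i j with rfl | h
    · simp only [Function.update_self]
      exact (measurable_pi_apply i).neg
    · simp only [Function.update_of_ne h]
      exact measurable_pi_apply i
  measurable_invFun := by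
    show Measurable (fun x : Fin n → ℝ => Function.update x j (-(x j)))
    apply measurable_pi_lambda
    intro i
    rcases eq_or_ne i j with rfl | h
    · simp only [Function.update_self]
      exact (measurable_pi_apply i).neg
    · simp only [Function.update_of_ne h]
      exact measurable_pi_apply i

lemma flipEquiv_eq (j : Fin n) (x : Fin n → ℝ) :
    flipEquiv j x = fun i => if i = j then -(x i) else x i := by
  funext i
  rcases eq_or_ne i j with rfl | h
  · simp [flipEquiv]
  · simp [flipEquiv, Function.update_of_ne h, h]

lemma flip_measurePreserving (j : Fin n) :
    MeasurePreserving (flipEquiv j) (volume : Measure (Fin n → ℝ)) volume := by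
  have h : MeasurePreserving (fun (x : Fin n → ℝ) i => if i = j then -(x i) else x i)
      volume volume := by
    have hf : ∀ i : Fin n, MeasurePreserving
        (if i = j then (fun t : ℝ => -t) else id) volume volume := by
      intro i
      by_cases h : i = j
      · simpa [h] using Measure.measurePreserving_neg (volume : Measure ℝ)
      · simpa [h] using MeasurePreserving.id (volume : Measure ℝ)
    have := MeasureTheory.volume_preserving_pi hf
    convert this using 2 with x
    · rfl
    · rfl
    funext i
    by_cases h : i = j <;> simp [h]
  have : (flipEquiv j : (Fin n → ℝ) → (Fin n → ℝ))
      = fun x i => if i = j then -(x i) else x i := by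
    funext x; exact flipEquiv_eq j x
  rw [this]
  exact h

end Aux

/-- Let `S ⊂ ℝⁿ` be a bounded measurable set of positive measure,
symmetric with respect to each coordinate hyperplane `{x_j = 0}` (invariant under
flipping the sign of any single coordinate), with `x_j / x_k` integrable on `S` and
`x_k ≠ 0` a.e. on `S`.  Then the average of `x_j / x_k` over `S` is `0` for `j ≠ k`,
and consequently the set-theoretic mode-in-state participation factor
`avg_{x⁰ ∈ S} (l i ⬝ x⁰) r i k / x⁰ k` equals `l i k * r i k`. -/
theorem stmt6 (n : ℕ) (S : Set (Fin n → ℝ))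
    (hSmeas : MeasurableSet S) (hSbdd : Bornology.IsBounded S)
    (hSpos : 0 < volume S)
    (hSsym : ∀ j : Fin n, (fun x => Function.update x j (-(x j))) '' S = S)
    (A : Matrix (Fin n) (Fin n) ℝ) (lam : Fin n → ℝ)
    (r l : Fin n → Fin n → ℝ)
    (hr : ∀ i, A.mulVec (r i) = lam i • r i)
    (hl : ∀ i, Matrix.vecMul (l i) A = lam i • l i)
    (hnorm : ∀ i j, ∑ k, l i k * r j k = if i = j then 1 else 0)
    (k : Fin n)
    (hne : ∀ᵐ x ∂(volume.restrict S), x k ≠ 0)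
    (hint : ∀ j, IntegrableOn (fun x => x j / x k) S volume) :
    (∀ j, j ≠ k → ⨍ x in S, x j / x k = 0) ∧
    (∀ i, ⨍ x in S, (∑ m, l i m * x m) * r i k / x k = l i k * r i k) := by
  have hfin : volume S ≠ ⊤ := hSbdd.measure_lt_top.ne
  -- preimage of S under the flip is S
  have hpre : ∀ j : Fin n, (flipEquiv j) ⁻¹' S = S := by
    intro j
    have himg : (flipEquiv j) '' S = S := hSsym j
    conv_lhs => rw [← himg]
    exact Set.preimage_image_eq _ (flipEquiv j).injective
  -- key: the integral of x_j / x_k over S vanishes for j ≠ k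
  have hzero : ∀ j, j ≠ k → ∫ x in S, x j / x k = 0 := by
    intro j hjk
    have hMP := flip_measurePreserving (n := n) j
    have hemb := (flipEquiv (n := n) j).measurableEmbedding
    have h1 : ∫ x in (flipEquiv j) ⁻¹' S, ((flipEquiv j x) j / (flipEquiv j x) k) ∂volume
        = ∫ x in S, x j / x k ∂volume :=
      hMP.setIntegral_preimage_emb hemb (fun x => x j / x k) S
    rw [hpre j] at h1
    have h2 : ∀ x : Fin n → ℝ, (flipEquiv j x) j / (flipEquiv j x) k = -(x j / x k) := by
      intro x
      rw [flipEquiv_eq]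
      simp [hjk.symm, Ne.symm hjk, neg_div]
    rw [show (fun x : Fin n → ℝ => (flipEquiv j x) j / (flipEquiv j x) k)
        = fun x => -(x j / x k) from funext h2] at h1
    rw [integral_neg] at h1
    linarith
  have havg0 : ∀ j, j ≠ k → ⨍ x in S, x j / x k = 0 := by
    intro j hjk
    rw [setAverage_eq, hzero j hjk, smul_zero]
  refine ⟨havg0, ?_⟩
  intro i
  -- integral of x_k / x_k over S is volume S
  have hkk : ∫ x in S, x k / x k = (volume S).toReal := by
    have : ∫ x in S, x k / x k = ∫ x in S, (1 : ℝ) := by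
      apply integral_congr_ae
      filter_upwards [hne] with x hx
      exact div_self hx
    rw [this, setIntegral_const, smul_eq_mul, mul_one]
    rfl
  have hrw : (fun x : Fin n → ℝ => (∑ m, l i m * x m) * r i k / x k)
      = fun x => ∑ m, (l i m * r i k) * (x m / x k) := by
    funext x
    rw [Finset.sum_mul, Finset.sum_div]
    congr 1; funext m; ring
  rw [hrw, setAverage_eq]
  rw [integral_finset_sum _ (fun m _ => ((hint m).const_mul _))]
  have hsum : ∀ m ∈ Finset.univ, m ≠ k →
      ∫ x in S, (l i m * r i k) * (x m / x k) = 0 := by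
    intro m _ hm
    rw [integral_const_mul, hzero m hm, mul_zero]
  rw [Finset.sum_eq_single_of_mem k (Finset.mem_univ k) (fun m _ hm => hsum m (Finset.mem_univ m) hm)]
  rw [integral_const_mul, hkk, smul_eq_mul, measureReal_def]
  have hvol : (volume S).toReal ≠ 0 := by
    simp [ENNReal.toReal_ne_zero, hSpos.ne', hfin]
  field_simp
end
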